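/- Let R = ℂ[x_1,…,x_n], let I_1, I_2 ⊆ R be ideals and let k ∈ ℕ. Then D_0^k[I_1] + D_0^k[I_2] ⊆ D_0^k[I_1 ∩ I_2], and there exists l ∈ ℕ such that D_0^k[I_1 ∩ I_2] ⊆ D_0^l[I_1] + D_0^l[I_2]. -/

import Mathlib

open MvPolynomial

noncomputable section

/-- Apolarity pairing `⟨q, f⟩ = ∑ α (coeff α q) * (coeff α f)`. -/
def apair {n : ℕ} (q f : MvPolynomial (Fin n) ℂ) : ℂ :=
  ∑ α ∈ q.support, q.coeff α * f.coeff α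

lemma apair_eq_sum {n : ℕ} {q : MvPolynomial (Fin n) ℂ} {s : Finset (Fin n →₀ ℕ)}
    (h : q.support ⊆ s) (f : MvPolynomial (Fin n) ℂ) :
    apair q f = ∑ α ∈ s, q.coeff α * f.coeff α :=
  Finset.sum_subset h (fun α _ hα => by
    rw [MvPolynomial.notMem_support_iff.mp hα, zero_mul])

/-- The Macaulay dual space `D_0[I]` of an ideal at the origin. -/
def dualSpace {n : ℕ} (I : Ideal (MvPolynomial (Fin n) ℂ)) :
    Submodule ℂ (MvPolynomial (Fin n) ℂ) where
  carrier := {q | ∀ f ∈ I, apair q f = 0}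
  zero_mem' := by intro f hf; simp [apair]
  add_mem' := by
    intro a b ha hb f hf
    have h : apair (a + b) f = apair a f + apair b f := by
      rw [apair_eq_sum (s := a.support ∪ b.support) MvPolynomial.support_add,
        apair_eq_sum (s := a.support ∪ b.support) Finset.subset_union_left,
        apair_eq_sum (s := a.support ∪ b.support) Finset.subset_union_right,
        ← Finset.sum_add_distrib]
      exact Finset.sum_congr rfl fun α _ => by rw [coeff_add, add_mul]
    rw [h, ha f hf, hb f hf, add_zero]
  smul_mem' := by
    intro c q hq f hf
    have h : apair (c • q) f = c * apair q f := by
      rw [apair_eq_sum (s := q.support) MvPolynomial.support_smul, apair, Finset.mul_sum]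
      exact Finset.sum_congr rfl fun α _ => by rw [coeff_smul, smul_eq_mul, mul_assoc]
    rw [h, hq f hf, mul_zero]

open scoped Classical in
/-- The contraction `g ∘ q`, realizing the action of `g` on differential functionals:
`coeff α (contract g q) = ∑ β, coeff β g * coeff (α + β) q`. -/
def contract {n : ℕ} (g q : MvPolynomial (Fin n) ℂ) : MvPolynomial (Fin n) ℂ :=
  ∑ β ∈ g.support, ∑ α ∈ q.support,
    if β ≤ α then monomial (α - β) (g.coeff β * q.coeff α) else 0

/-- The truncated dual space `D_0^k[I]`. -/
def truncDual {n : ℕ} (k : ℕ) (I : Ideal (MvPolynomial (Fin n) ℂ)) :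
    Submodule ℂ (MvPolynomial (Fin n) ℂ) where
  carrier := {q | q ∈ dualSpace I ∧ q.totalDegree ≤ k}
  zero_mem' := ⟨(dualSpace I).zero_mem, by simp⟩
  add_mem' := fun ha hb => ⟨(dualSpace I).add_mem ha.1 hb.1,
    le_trans (MvPolynomial.totalDegree_add _ _) (max_le ha.2 hb.2)⟩
  smul_mem' := fun c q hq => ⟨(dualSpace I).smul_mem c hq.1,
    le_trans (MvPolynomial.totalDegree_smul_le c q) hq.2⟩


/-! ### Auxiliary development -/

namespace TruncDualAux

abbrev edeg {n : ℕ} (d : Fin n →₀ ℕ) : ℕ := d.sum fun _ e => e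

lemma edeg_add {n : ℕ} (u v : Fin n →₀ ℕ) : edeg (u + v) = edeg u + edeg v :=
  Finsupp.sum_add_index' (fun _ => rfl) (fun _ _ _ => rfl)

lemma edeg_mono {n : ℕ} {u v : Fin n →₀ ℕ} (h : u ≤ v) : edeg u ≤ edeg v := by
  obtain ⟨t, rfl⟩ := le_iff_exists_add.mp h
  rw [edeg_add]; exact Nat.le_add_right _ _

/-- the ideal generated by variables -/
def mIdeal (n : ℕ) : Ideal (MvPolynomial (Fin n) ℂ) :=
  Ideal.span (Set.range (X : Fin n → MvPolynomial (Fin n) ℂ))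

/-- span of monomials of degree ≥ m -/
def MI (n m : ℕ) : Ideal (MvPolynomial (Fin n) ℂ) :=
  Ideal.span ((fun s => monomial s (1 : ℂ)) '' {s | m ≤ edeg s})

variable {n : ℕ}

lemma mem_MI {m : ℕ} {f : MvPolynomial (Fin n) ℂ} :
    f ∈ MI n m ↔ ∀ d ∈ f.support, m ≤ edeg d := by
  rw [MI, mem_ideal_span_monomial_image]
  constructor
  · intro h d hd
    obtain ⟨s, hs, hle⟩ := h d hd
    exact hs.trans (edeg_mono hle)
  · intro h d hd
    exact ⟨d, h d hd, le_rfl⟩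

lemma mem_MI' {m : ℕ} {f : MvPolynomial (Fin n) ℂ} :
    f ∈ MI n m ↔ ∀ d : Fin n →₀ ℕ, edeg d < m → coeff d f = 0 := by
  rw [mem_MI]
  constructor
  · intro h d hd
    by_contra hc
    exact absurd (h d (mem_support_iff.mpr hc)) (not_le.mpr hd)
  · intro h d hd
    by_contra hc
    exact mem_support_iff.mp hd (h d (not_le.mp hc))

lemma MI_mul (a b : ℕ) : MI n a * MI n b ≤ MI n (a + b) := by
  rw [Ideal.mul_le]
  intro r hr s hs
  rw [mem_MI'] at *
  intro d hd
  classical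
  rw [coeff_mul]
  apply Finset.sum_eq_zero
  rintro ⟨u, v⟩ huv
  rw [Finset.HasAntidiagonal.mem_antidiagonal] at huv
  by_cases hu : edeg u < a
  · rw [hr u hu, zero_mul]
  · have : edeg v < b := by
      have := edeg_add u v
      rw [huv] at this
      omega
    rw [hs v this, mul_zero]

lemma mIdeal_pow_le (m : ℕ) : (mIdeal n) ^ m ≤ MI n m := by
  induction m with
  | zero =>
    intro f _
    rw [mem_MI]; intro d _; exact Nat.zero_le _
  | succ m ih =>
    rw [pow_succ]
    refine le_trans (Ideal.mul_mono ih ?_) (MI_mul m 1)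
    rw [mIdeal, Ideal.span_le]
    rintro _ ⟨i, rfl⟩
    show (monomial (Finsupp.single i 1) (1:ℂ)) ∈ MI n 1
    exact Ideal.subset_span ⟨Finsupp.single i 1, by simp [edeg, Finsupp.sum_single_index], rfl⟩

lemma le_mIdeal_pow (m : ℕ) : MI n m ≤ (mIdeal n) ^ m := by
  rw [MI, Ideal.span_le]
  rintro _ ⟨s, hs, rfl⟩
  show (monomial s (1:ℂ)) ∈ mIdeal n ^ m
  rw [monomial_eq, map_one, one_mul]
  have h1 : (s.prod fun i e => (X i : MvPolynomial (Fin n) ℂ) ^ e) ∈ (mIdeal n) ^ (edeg s) := by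
    rw [Finsupp.prod, edeg, Finsupp.sum, ← Finset.prod_pow_eq_pow_sum]
    exact Ideal.prod_mem_prod fun i _ =>
      Ideal.pow_mem_pow (Ideal.subset_span (Set.mem_range_self i)) _
  exact Ideal.pow_le_pow_right hs h1

lemma mem_mIdeal_pow {m : ℕ} {f : MvPolynomial (Fin n) ℂ} :
    f ∈ (mIdeal n) ^ m ↔ ∀ d : Fin n →₀ ℕ, edeg d < m → coeff d f = 0 := by
  rw [← mem_MI']
  exact ⟨fun h => mIdeal_pow_le m h, fun h => le_mIdeal_pow m h⟩

section AR
variable (n : ℕ)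
local notation "R'" => MvPolynomial (Fin n) ℂ

lemma mem_smul_top_prod {A B : Type*} [AddCommGroup A] [AddCommGroup B] [Module R' A]
    [Module R' B] (J : Ideal R') {x : A} {y : B}
    (hx : x ∈ J • (⊤ : Submodule R' A)) (hy : y ∈ J • (⊤ : Submodule R' B)) :
    (x, y) ∈ J • (⊤ : Submodule R' (A × B)) := by
  have h1 : ((x, (0 : B)) : A × B) ∈ J • (⊤ : Submodule R' (A × B)) := by
    have : ((x, (0 : B)) : A × B) ∈ Submodule.map (LinearMap.inl R' A B) (J • ⊤) :=
      ⟨x, hx, rfl⟩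
    rw [Submodule.map_smul''] at this
    exact Submodule.smul_mono le_rfl le_top this
  have h2 : (((0 : A), y) : A × B) ∈ J • (⊤ : Submodule R' (A × B)) := by
    have : (((0 : A), y) : A × B) ∈ Submodule.map (LinearMap.inr R' A B) (J • ⊤) :=
      ⟨y, hy, rfl⟩
    rw [Submodule.map_smul''] at this
    exact Submodule.smul_mono le_rfl le_top this
  have := Submodule.add_mem _ h1 h2
  simpa using this

lemma mk_mem_smul_top (J I : Ideal R') {f : R'} (hf : f ∈ I ⊔ J) :
    I.mkQ f ∈ J • (⊤ : Submodule R' (R' ⧸ I)) := by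
  obtain ⟨a, ha, m, hm, rfl⟩ := Submodule.mem_sup.mp hf
  rw [map_add, Submodule.mkQ_apply, (Submodule.Quotient.mk_eq_zero I).mpr ha, zero_add]
  have : I.mkQ m ∈ Submodule.map I.mkQ (J • ⊤) := by
    refine ⟨m, ?_, rfl⟩
    rw [Ideal.smul_eq_mul, Ideal.mul_top]; exact hm
  rw [Submodule.map_smul''] at this
  exact Submodule.smul_mono le_rfl le_top this

lemma artinRees_key (I₁ I₂ : Ideal R') (k : ℕ) :
    ∃ l : ℕ, k ≤ l ∧ ∀ f : R', f ∈ I₁ ⊔ (mIdeal n) ^ (l + 1) → f ∈ I₂ ⊔ (mIdeal n) ^ (l + 1) →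
      ∃ h ∈ I₁ ⊓ I₂, f - h ∈ (mIdeal n) ^ (k + 1) := by
  set φ : R' →ₗ[R'] (R' ⧸ I₁) × (R' ⧸ I₂) := LinearMap.prod I₁.mkQ I₂.mkQ with hφ
  have hker : LinearMap.ker φ = I₁ ⊓ I₂ := by
    rw [hφ, LinearMap.ker_prod, Submodule.ker_mkQ, Submodule.ker_mkQ]
  obtain ⟨c, hc⟩ := Ideal.exists_pow_inf_eq_pow_smul (mIdeal n) (LinearMap.range φ)
  refine ⟨k + c, le_self_add, fun f hf1 hf2 => ?_⟩
  have hmem : φ f ∈ (mIdeal n) ^ (k + c + 1) • ⊤ ⊓ LinearMap.range φ := by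
    refine ⟨?_, ⟨f, rfl⟩⟩
    exact mem_smul_top_prod n _ (mk_mem_smul_top n _ _ hf1) (mk_mem_smul_top n _ _ hf2)
  rw [hc (k + c + 1) (by omega)] at hmem
  have : φ f ∈ (mIdeal n) ^ (k + c + 1 - c) • LinearMap.range φ :=
    Submodule.smul_mono le_rfl inf_le_right hmem
  have hkc : k + c + 1 - c = k + 1 := by omega
  rw [hkc, ← Submodule.map_top, ← Submodule.map_smul'', Ideal.smul_eq_mul, Ideal.mul_top]
    at this
  obtain ⟨g, hg, hgf⟩ := this
  refine ⟨f - g, ?_, by simpa using hg⟩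
  rw [← hker, LinearMap.mem_ker, map_sub, hgf, sub_self]
end AR

/-! ### apair lemmas -/

lemma apair_comm (q f : MvPolynomial (Fin n) ℂ) : apair q f = apair f q := by
  rw [apair_eq_sum (Finset.subset_union_left (s₂ := f.support)) f,
    apair_eq_sum (Finset.subset_union_right (s₁ := q.support)) q]
  exact Finset.sum_congr rfl fun α _ => mul_comm _ _

lemma apair_add_right (q f g : MvPolynomial (Fin n) ℂ) :
    apair q (f + g) = apair q f + apair q g := by
  rw [apair, apair, apair, ← Finset.sum_add_distrib]
  exact Finset.sum_congr rfl fun α _ => by rw [coeff_add, mul_add]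

lemma apair_sub_right (q f g : MvPolynomial (Fin n) ℂ) :
    apair q (f - g) = apair q f - apair q g := by
  rw [apair, apair, apair, ← Finset.sum_sub_distrib]
  exact Finset.sum_congr rfl fun α _ => by rw [coeff_sub, mul_sub]

lemma apair_smul_right (c : ℂ) (q f : MvPolynomial (Fin n) ℂ) :
    apair q (c • f) = c * apair q f := by
  rw [apair, apair, Finset.mul_sum]
  exact Finset.sum_congr rfl fun α _ => by
    rw [coeff_smul, smul_eq_mul]; ring

lemma apair_add_left (q f g : MvPolynomial (Fin n) ℂ) :
    apair (q + f) g = apair q g + apair f g := by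
  rw [apair_comm, apair_add_right, apair_comm g q, apair_comm g f]

lemma apair_smul_left (c : ℂ) (q f : MvPolynomial (Fin n) ℂ) :
    apair (c • q) f = c * apair q f := by
  rw [apair_comm, apair_smul_right, apair_comm]

lemma apair_monomial (q : MvPolynomial (Fin n) ℂ) (α : Fin n →₀ ℕ) :
    apair q (monomial α 1) = coeff α q := by
  classical
  rw [apair]
  rw [Finset.sum_congr rfl (fun β _ => by
    rw [coeff_monomial] : ∀ β ∈ q.support,
      coeff β q * coeff β (monomial α (1:ℂ)) = coeff β q * if α = β then 1 else 0)]
  simp only [mul_ite, mul_one, mul_zero]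
  rw [Finset.sum_ite_eq q.support α (fun β => coeff β q)]
  split_ifs with h
  · rfl
  · exact (MvPolynomial.notMem_support_iff.mp h).symm

/-- if `q` has degree ≤ k and `m` has no coefficients in degrees ≤ k, the pairing vanishes -/
lemma apair_eq_zero_of_lowcoeff {k : ℕ} {q m : MvPolynomial (Fin n) ℂ}
    (hq : q.totalDegree ≤ k) (hm : ∀ d : Fin n →₀ ℕ, edeg d ≤ k → coeff d m = 0) :
    apair q m = 0 := by
  rw [apair]
  apply Finset.sum_eq_zero
  intro α hα
  rw [hm α (le_trans (MvPolynomial.le_totalDegree hα) hq), mul_zero]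

/-! ### Truncation -/

open scoped Classical in
/-- truncation to total degree ≤ l, as a linear map into `restrictTotalDegree` -/
def truncLM (n l : ℕ) : MvPolynomial (Fin n) ℂ →ₗ[ℂ] (restrictTotalDegree (Fin n) ℂ l) :=
  LinearMap.codRestrict (restrictTotalDegree (Fin n) ℂ l)
    ((AddMonoidAlgebra.coeffLinearEquiv ℂ).symm.toLinearMap ∘ₗ
      (Finsupp.supported ℂ ℂ {d : Fin n →₀ ℕ | edeg d ≤ l}).subtype ∘ₗ
      Finsupp.restrictDom ℂ ℂ {d : Fin n →₀ ℕ | edeg d ≤ l} ∘ₗ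
      (AddMonoidAlgebra.coeffLinearEquiv ℂ).toLinearMap)
    (fun f => (Finsupp.restrictDom ℂ ℂ {d : Fin n →₀ ℕ | edeg d ≤ l}
      (AddMonoidAlgebra.coeffLinearEquiv ℂ f)).2)

lemma coeff_truncLM (l : ℕ) (f : MvPolynomial (Fin n) ℂ) (d : Fin n →₀ ℕ) :
    coeff d ((truncLM n l f : MvPolynomial (Fin n) ℂ)) =
      if edeg d ≤ l then coeff d f else 0 := by
  classical
  show (Finsupp.filter (· ∈ {d : Fin n →₀ ℕ | edeg d ≤ l})
    (AddMonoidAlgebra.coeffLinearEquiv ℂ f)) d = _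
  rw [Finsupp.filter_apply]
  congr 1

lemma apair_truncLM {l : ℕ} {q : MvPolynomial (Fin n) ℂ} (hq : q.totalDegree ≤ l)
    (f : MvPolynomial (Fin n) ℂ) :
    apair q ((truncLM n l f : MvPolynomial (Fin n) ℂ)) = apair q f := by
  rw [apair, apair]
  refine Finset.sum_congr rfl fun α hα => ?_
  rw [coeff_truncLM, if_pos (le_trans (MvPolynomial.le_totalDegree hα) hq)]

/-! ### The pairing on the finite-dimensional truncation -/

variable (n) in
/-- the apolarity pairing restricted to polynomials of degree ≤ l, as a map to the dual -/
def blin (l : ℕ) : (restrictTotalDegree (Fin n) ℂ l) →ₗ[ℂ]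
    Module.Dual ℂ (restrictTotalDegree (Fin n) ℂ l) :=
  LinearMap.mk₂ ℂ (fun q f : restrictTotalDegree (Fin n) ℂ l => apair q.1 f.1)
    (fun q q' f => apair_add_left _ _ _)
    (fun c q f => apair_smul_left _ _ _)
    (fun q f f' => apair_add_right _ _ _)
    (fun c q f => apair_smul_right _ _ _)

lemma blin_apply (l : ℕ) (q f : restrictTotalDegree (Fin n) ℂ l) :
    blin n l q f = apair q.1 f.1 := rfl

lemma blin_bijective (l : ℕ) : Function.Bijective (blin n l) := by
  have hinj : Function.Injective (blin n l) := by
    rw [injective_iff_map_eq_zero]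
    intro q hq
    ext1
    ext α
    simp only [Submodule.coe_zero, MvPolynomial.coeff_zero]
    by_cases hα : edeg α ≤ l
    · have hm : (monomial α (1:ℂ)) ∈ restrictTotalDegree (Fin n) ℂ l := by
        rw [mem_restrictTotalDegree]
        refine le_trans (totalDegree_monomial_le α 1) hα
      have := congrFun (congrArg DFunLike.coe hq) ⟨monomial α 1, hm⟩
      rw [blin_apply, apair_monomial] at this
      simpa using this
    · by_contra hc
      have := le_trans (MvPolynomial.le_totalDegree (mem_support_iff.mpr hc))
        ((mem_restrictTotalDegree _ _ _).mp q.2)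
      exact hα this
  refine ⟨hinj, ?_⟩
  have : FiniteDimensional ℂ (restrictTotalDegree (Fin n) ℂ l) := inferInstance
  exact (LinearMap.injective_iff_surjective_of_finrank_eq_finrank
    (Subspace.dual_finrank_eq).symm).mp hinj

end TruncDualAux

open TruncDualAux

/-- `D_0^k[I₁] + D_0^k[I₂] ⊆ D_0^k[I₁ ∩ I₂]`, and there exists `l` with
`D_0^k[I₁ ∩ I₂] ⊆ D_0^l[I₁] + D_0^l[I₂]`. -/
theorem truncDual_inf_le_and_exists (n : ℕ) (I₁ I₂ : Ideal (MvPolynomial (Fin n) ℂ))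
    (k : ℕ) :
    truncDual k I₁ + truncDual k I₂ ≤ truncDual k (I₁ ⊓ I₂) ∧
    ∃ l : ℕ, truncDual k (I₁ ⊓ I₂) ≤ truncDual l I₁ + truncDual l I₂ := by
  classical
  constructor
  · rw [Submodule.add_eq_sup]
    refine sup_le ?_ ?_
    · rintro q ⟨hq1, hq2⟩
      exact ⟨fun f hf => hq1 f hf.1, hq2⟩
    · rintro q ⟨hq1, hq2⟩
      exact ⟨fun f hf => hq1 f hf.2, hq2⟩
  · obtain ⟨l, hkl, hAR⟩ := artinRees_key n I₁ I₂ k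
    refine ⟨l, ?_⟩
    intro q hq
    obtain ⟨hq1, hq2⟩ := hq
    have hqE : q ∈ restrictTotalDegree (Fin n) ℂ l :=
      (mem_restrictTotalDegree _ _ _).mpr (hq2.trans hkl)
    set π := truncLM n l with hπ
    -- q annihilates A ⊓ B
    have hann : (blin n l) ⟨q, hqE⟩ ∈
        ((Submodule.map π (I₁.restrictScalars ℂ)) ⊓
          (Submodule.map π (I₂.restrictScalars ℂ))).dualAnnihilator := by
      rw [Submodule.mem_dualAnnihilator]
      rintro w ⟨⟨f₁, hf₁, hw1⟩, ⟨f₂, hf₂, hw2⟩⟩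
      rw [blin_apply]
      have hdiff : f₁ - f₂ ∈ (mIdeal n) ^ (l + 1) := by
        rw [mem_mIdeal_pow]
        intro d hd
        have h1 : coeff d ((π f₁ : MvPolynomial (Fin n) ℂ)) = coeff d f₁ := by
          rw [coeff_truncLM, if_pos (by omega)]
        have h2 : coeff d ((π f₂ : MvPolynomial (Fin n) ℂ)) = coeff d f₂ := by
          rw [coeff_truncLM, if_pos (by omega)]
        rw [coeff_sub, ← h1, ← h2, hw1, hw2, sub_self]
      have hf1' : f₁ ∈ I₁ ⊔ (mIdeal n) ^ (l + 1) := Submodule.mem_sup_left hf₁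
      have hf2' : f₁ ∈ I₂ ⊔ (mIdeal n) ^ (l + 1) := by
        have heq : f₁ = f₂ + (f₁ - f₂) := by ring
        rw [heq]
        exact Submodule.add_mem_sup hf₂ hdiff
      obtain ⟨h, hh, hm⟩ := hAR f₁ hf1' hf2'
      have hw : apair q (w : MvPolynomial (Fin n) ℂ) = apair q f₁ := by
        rw [← hw1]; exact apair_truncLM (hq2.trans hkl) f₁
      have heq : f₁ = h + (f₁ - h) := by ring
      rw [hw, heq, apair_add_right, hq1 h hh, zero_add]
      exact apair_eq_zero_of_lowcoeff hq2 (fun d hd => (mem_mIdeal_pow.mp hm) d (by omega))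
    rw [Subspace.dualAnnihilator_inf_eq] at hann
    obtain ⟨ψ₁, hψ₁, ψ₂, hψ₂, hsum⟩ := Submodule.mem_sup.mp hann
    obtain ⟨q₁, rfl⟩ := (blin_bijective l).2 ψ₁
    obtain ⟨q₂, rfl⟩ := (blin_bijective l).2 ψ₂
    have hqq : q₁ + q₂ = (⟨q, hqE⟩ : restrictTotalDegree (Fin n) ℂ l) :=
      (blin_bijective l).1 (by rw [map_add, hsum])
    have key : ∀ (I : Ideal (MvPolynomial (Fin n) ℂ)) (qq : restrictTotalDegree (Fin n) ℂ l),
        (blin n l qq ∈ (Submodule.map π (I.restrictScalars ℂ)).dualAnnihilator) →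
        (qq : MvPolynomial (Fin n) ℂ) ∈ truncDual l I := by
      intro I qq hqq'
      refine ⟨fun f hf => ?_, (mem_restrictTotalDegree _ _ _).mp qq.2⟩
      have hz : apair (qq : MvPolynomial (Fin n) ℂ) ((π f : MvPolynomial (Fin n) ℂ)) = 0 :=
        (Submodule.mem_dualAnnihilator _).mp hqq' (π f) ⟨f, hf, rfl⟩
      rw [apair_truncLM ((mem_restrictTotalDegree _ _ _).mp qq.2)] at hz
      exact hz
    rw [Submodule.add_eq_sup]
    refine Submodule.mem_sup.mpr ⟨q₁, key I₁ q₁ hψ₁, q₂, key I₂ q₂ hψ₂, ?_⟩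
    have := congrArg Subtype.val hqq
    simpa using this
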